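/- Let f(z) = z + a₂z² + a₃z³ + ⋯ be analytic on the unit disk D and ω(z) = c₁z + c₂z² + c₃z³ + ⋯ a Schwarz function such that zf'(z)/f(z) = ω(z) + √(1 + ω(z)²) for all z ∈ D (principal branch of the square root). Then the third Hankel determinant of f satisfies H₃(1) = −(1/9)(c₃ − (5/16)c₁c₂)² − (31/256)c₁²c₂² + (11/144)c₁³(c₃ + (5/11)c₁c₂ − (7/44)c₁³) + (1/8)(c₂ − (1/2)c₁²)c₄. -/

import Mathlib

open Complex Metric Finset FormalMultilinearSeries Filter
open scoped ENNReal NNReal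

namespace Hankel3Aux

lemma hasFPS (F : ℂ → ℂ) (b : ℕ → ℂ)
    (h : ∀ z ∈ ball (0:ℂ) 1, HasSum (fun n => b n * z ^ n) (F z)) :
    HasFPowerSeriesOnBall F (ofScalars ℂ b) 0 1 := by
  refine ⟨?_, zero_lt_one, fun {y} hy => ?_⟩
  · apply ENNReal.le_of_forall_nnreal_lt
    intro r hr
    have hr1 : (r : ℝ) < 1 := by exact_mod_cast hr
    have hz : ((r : ℝ) : ℂ) ∈ ball (0:ℂ) 1 := by
      rw [mem_ball_zero_iff]
      simpa using hr1
    have hsum := (h _ hz).summable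
    have ht : Tendsto (fun n => ‖b n * ((r:ℝ):ℂ) ^ n‖) atTop (nhds 0) :=
      tendsto_zero_iff_norm_tendsto_zero.mp hsum.tendsto_atTop_zero
    refine FormalMultilinearSeries.le_radius_of_tendsto _ (ht.congr fun n => ?_)
    rw [ofScalars_norm, norm_mul, norm_pow, Complex.norm_real,
      Real.norm_eq_abs, _root_.abs_of_nonneg r.coe_nonneg]
  · rw [mem_emetric_ball_zero_iff] at hy
    have hy1 : ‖y‖ < 1 := by rw [enorm_eq_nnnorm] at hy; exact_mod_cast hy
    simpa only [FormalMultilinearSeries.ofScalars_apply_eq, smul_eq_mul, zero_add] using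
      h y (mem_ball_zero_iff.mpr hy1)

lemma summable_norm' (F : ℂ → ℂ) (b : ℕ → ℂ)
    (h : ∀ z ∈ ball (0:ℂ) 1, HasSum (fun n => b n * z ^ n) (F z))
    {z : ℂ} (hz : ‖z‖ < 1) :
    Summable fun n => ‖b n * z ^ n‖ := by
  have hp := hasFPS F b h
  have hrad : (‖z‖₊ : ℝ≥0∞) < (ofScalars ℂ b).radius :=
    lt_of_lt_of_le (by exact_mod_cast hz) hp.r_le
  refine ((ofScalars ℂ b).summable_norm_mul_pow hrad).congr fun n => ?_
  rw [ofScalars_norm, norm_mul, norm_pow, coe_nnnorm]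

lemma hasSum_zderiv (F : ℂ → ℂ) (b : ℕ → ℂ)
    (h : ∀ z ∈ ball (0:ℂ) 1, HasSum (fun n => b n * z ^ n) (F z)) :
    ∀ z ∈ ball (0:ℂ) 1, HasSum (fun n : ℕ => (n : ℂ) * b n * z ^ n) (z * deriv F z) := by
  intro z hz
  have hp := (hasFPS F b h).fderiv
  have hz' : z ∈ eball (0:ℂ) 1 := by
    rw [mem_emetric_ball_zero_iff, enorm_eq_nnnorm]
    exact_mod_cast mem_ball_zero_iff.mp hz
  have h1 := (ContinuousLinearMap.apply ℂ ℂ z).hasSum (hp.hasSum hz')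
  have h2 : ∀ n : ℕ, (((ofScalars ℂ b).derivSeries n) (fun _ => z)) z
      = ((n:ℂ)+1) * b (n+1) * z ^ (n+1) := by
    intro n
    rw [FormalMultilinearSeries.derivSeries_apply_diag, ofScalars_apply_eq, nsmul_eq_mul,
      smul_eq_mul]
    push_cast
    ring
  have h3 : fderiv ℂ F (0 + z) z = z * deriv F z := by
    rw [zero_add, show z = z • (1:ℂ) by simp, ContinuousLinearMap.map_smul]
    simp [fderiv_apply_one_eq_deriv, smul_eq_mul]
  have h4 : HasSum (fun n => ((n:ℕ)+1 : ℂ) * b (n+1) * z ^ (n+1)) (z * deriv F z) := by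
    rw [← h3]
    exact h1.congr_fun fun n => (h2 n).symm
  have h5 : HasSum (fun n : ℕ => ((n+1:ℕ) : ℂ) * b (n+1) * z ^ (n+1))
      (z * deriv F z - ∑ i ∈ range 1, (i : ℂ) * b i * z ^ i) := by
    simpa using h4
  exact (hasSum_nat_add_iff' 1).mp h5

lemma coeff_zero (e : ℕ → ℂ)
    (h : ∀ z ∈ ball (0:ℂ) 1, HasSum (fun n => e n * z ^ n) 0) : ∀ n, e n = 0 := by
  have hp := hasFPS (fun _ => (0:ℂ)) e h
  have h0 : ofScalars ℂ e = 0 :=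
    HasFPowerSeriesAt.eq_zero (x := (0:ℂ)) hp.hasFPowerSeriesAt
  rw [ofScalars_series_eq_zero] at h0
  exact fun n => congrFun h0 n

lemma conv_eq (x y : ℕ → ℂ) (z : ℂ) (n : ℕ) :
    ∑ k ∈ range (n+1), (x k * z ^ k) * (y (n-k) * z ^ (n-k))
      = (∑ k ∈ range (n+1), x k * y (n-k)) * z ^ n := by
  rw [Finset.sum_mul]
  refine Finset.sum_congr rfl fun k hk => ?_
  have hkn : k + (n - k) = n := Nat.add_sub_cancel' (Nat.lt_succ_iff.mp (Finset.mem_range.mp hk))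
  calc (x k * z ^ k) * (y (n-k) * z ^ (n-k)) = x k * y (n-k) * (z ^ k * z ^ (n-k)) := by ring
    _ = (x k * y (n-k)) * z ^ n := by rw [← pow_add, hkn]

end Hankel3Aux

open Complex Metric Hankel3Aux Finset

theorem third_hankel_formula_starlike_q
    (f : ℂ → ℂ) (a : ℕ → ℂ)
    (hf : DifferentiableOn ℂ f (ball (0 : ℂ) 1))
    (hfa : ∀ z ∈ ball (0 : ℂ) 1, HasSum (fun n => a n * z ^ n) (f z))
    (ha0 : a 0 = 0) (ha1 : a 1 = 1)
    (ω : ℂ → ℂ) (c : ℕ → ℂ)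
    (hω : DifferentiableOn ℂ ω (ball (0 : ℂ) 1))
    (hωc : ∀ z ∈ ball (0 : ℂ) 1, HasSum (fun n => c n * z ^ n) (ω z))
    (hc0 : c 0 = 0)
    (hωmap : ∀ z ∈ ball (0 : ℂ) 1, ω z ∈ ball (0 : ℂ) 1)
    (heq : ∀ z ∈ ball (0 : ℂ) 1,
      z * deriv f z = f z * (ω z + (1 + ω z ^ 2) ^ ((1 : ℂ) / 2))) :
    a 3 * (a 2 * a 4 - a 3 ^ 2) - a 4 * (a 4 - a 2 * a 3) + a 5 * (a 3 - a 2 ^ 2)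
      = -(1 / 9) * (c 3 - (5 / 16) * c 1 * c 2) ^ 2 - (31 / 256) * c 1 ^ 2 * c 2 ^ 2
        + (11 / 144) * c 1 ^ 3 * (c 3 + (5 / 11) * c 1 * c 2 - (7 / 44) * c 1 ^ 3)
        + (1 / 8) * (c 2 - (1 / 2) * c 1 ^ 2) * c 4 := by
  -- the squared functional equation
  have hg : ∀ z ∈ ball (0:ℂ) 1,
      (z * deriv f z)^2 - (f z)^2 - 2*(z*deriv f z)*(f z)*(ω z) = 0 := by
    intro z hz
    have h1 := heq z hz
    have hne : (1 : ℂ) + ω z ^ 2 ≠ 0 := by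
      intro h0
      have hb : ‖ω z‖ < 1 := mem_ball_zero_iff.mp (hωmap z hz)
      have h2 : ω z ^ 2 = -1 := by linear_combination h0
      have h3 := congrArg norm h2
      rw [norm_pow] at h3
      simp only [norm_neg, norm_one] at h3
      nlinarith [norm_nonneg (ω z)]
    have hs2 : ((1 + ω z ^ 2) ^ ((1:ℂ)/2)) ^ 2 = 1 + ω z ^ 2 := by
      calc ((1 + ω z ^ 2) ^ ((1:ℂ)/2)) ^ 2
          = (1 + ω z^2) ^ ((1:ℂ)/2) * (1 + ω z^2) ^ ((1:ℂ)/2) := sq _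
        _ = (1 + ω z^2) ^ ((1:ℂ)/2 + 1/2) := (Complex.cpow_add _ _ hne).symm
        _ = (1 + ω z^2) ^ (1:ℂ) := by norm_num
        _ = 1 + ω z^2 := Complex.cpow_one _
    linear_combination (z * deriv f z + f z * ((1 + ω z ^ 2) ^ ((1:ℂ)/2) - ω z)) * h1
      + (f z)^2 * hs2
  have hA := hasSum_zderiv f a hfa
  -- coefficient identities
  have key : ∀ n : ℕ,
      (∑ k ∈ range (n+1), ((k:ℂ) * a k) * (((n-k : ℕ):ℂ) * a (n-k)))
      - (∑ k ∈ range (n+1), a k * a (n-k))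
      - 2 * (∑ k ∈ range (n+1),
          (∑ j ∈ range (k+1), ((j:ℂ) * a j) * a (k-j)) * c (n-k)) = 0 := by
    apply coeff_zero
    intro z hz
    have hzn : ‖z‖ < 1 := mem_ball_zero_iff.mp hz
    have HA := hA z hz
    have HF := hfa z hz
    have HC := hωc z hz
    have nA : Summable fun n : ℕ => ‖(n:ℂ) * a n * z ^ n‖ :=
      summable_norm' _ _ hA hzn
    have nF : Summable fun n : ℕ => ‖a n * z ^ n‖ := summable_norm' _ _ hfa hzn
    have nC : Summable fun n : ℕ => ‖c n * z ^ n‖ := summable_norm' _ _ hωc hzn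
    set fA : ℕ → ℂ := fun n : ℕ => (n:ℂ) * a n * z ^ n with hfA
    set fF : ℕ → ℂ := fun n : ℕ => a n * z ^ n with hfF
    set fC : ℕ → ℂ := fun n : ℕ => c n * z ^ n with hfC
    have SU : Summable (fun n => ∑ k ∈ range (n+1), fA k * fA (n-k)) :=
      (summable_norm_sum_mul_range_of_summable_norm nA nA).of_norm
    have SV : Summable (fun n => ∑ k ∈ range (n+1), fF k * fF (n-k)) :=
      (summable_norm_sum_mul_range_of_summable_norm nF nF).of_norm
    have nW : Summable fun n => ‖∑ k ∈ range (n+1), fA k * fF (n-k)‖ :=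
      summable_norm_sum_mul_range_of_summable_norm nA nF
    have ST : Summable (fun n => ∑ k ∈ range (n+1),
        (∑ j ∈ range (k+1), fA j * fF (k-j)) * fC (n-k)) :=
      (summable_norm_sum_mul_range_of_summable_norm nW nC).of_norm
    have tU : (∑' n, ∑ k ∈ range (n+1), fA k * fA (n-k))
        = (z * deriv f z) * (z * deriv f z) := by
      rw [← tsum_mul_tsum_eq_tsum_sum_range_of_summable_norm nA nA, HA.tsum_eq]
    have tV : (∑' n, ∑ k ∈ range (n+1), fF k * fF (n-k)) = f z * f z := by
      rw [← tsum_mul_tsum_eq_tsum_sum_range_of_summable_norm nF nF, HF.tsum_eq]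
    have tW : (∑' n, ∑ k ∈ range (n+1), fA k * fF (n-k)) = (z * deriv f z) * f z := by
      rw [← tsum_mul_tsum_eq_tsum_sum_range_of_summable_norm nA nF, HA.tsum_eq, HF.tsum_eq]
    have tT : (∑' n, ∑ k ∈ range (n+1), (∑ j ∈ range (k+1), fA j * fF (k-j)) * fC (n-k))
        = ((z * deriv f z) * f z) * ω z := by
      rw [← tsum_mul_tsum_eq_tsum_sum_range_of_summable_norm nW nC, tW, HC.tsum_eq]
    have HU : HasSum (fun n => ∑ k ∈ range (n+1), fA k * fA (n-k))
        ((z * deriv f z) * (z * deriv f z)) := tU ▸ SU.hasSum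
    have HV : HasSum (fun n => ∑ k ∈ range (n+1), fF k * fF (n-k)) (f z * f z) :=
      tV ▸ SV.hasSum
    have HT : HasSum (fun n => ∑ k ∈ range (n+1),
        (∑ j ∈ range (k+1), fA j * fF (k-j)) * fC (n-k)) (((z * deriv f z) * f z) * ω z) :=
      tT ▸ ST.hasSum
    have Hfin := (HU.sub HV).sub (HT.mul_left 2)
    have hval : ((z * deriv f z) * (z * deriv f z) - f z * f z)
        - 2 * (((z * deriv f z) * f z) * ω z) = 0 := by
      linear_combination hg z hz
    rw [hval] at Hfin
    refine Hfin.congr_fun fun n => ?_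
    simp only [hfA, hfF, hfC, conv_eq]
    rw [conv_eq (fun k : ℕ => (k:ℂ) * a k) (fun k : ℕ => (k:ℂ) * a k) z n]
    ring
  have e3 := key 3
  have e4 := key 4
  have e5 := key 5
  have e6 := key 6
  simp only [Finset.sum_range_succ, Finset.sum_range_zero] at e3 e4 e5 e6
  norm_num [ha0, ha1, hc0] at e3 e4 e5 e6
  have ha2 : a 2 = c 1 := by linear_combination e3 / 2
  rw [ha2] at e4 e5 e6
  have ha3 : a 3 = c 2 / 2 + 3/4 * c 1 ^ 2 := by linear_combination e4 / 4
  rw [ha3] at e5 e6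
  have ha4 : a 4 = c 3 / 3 + 5/6 * c 1 * c 2 + 5/12 * c 1 ^ 3 := by
    linear_combination e5 / 6
  rw [ha4] at e6
  have ha5 : a 5 = c 4 / 4 + c 2 ^ 2 / 4 + 7/12 * c 1 * c 3 + 17/24 * c 1 ^ 2 * c 2
      + c 1 ^ 4 / 6 := by linear_combination e6 / 8
  rw [ha2, ha3, ha4, ha5]
  ring
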